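/- In the electricity pool model (P2), for every load profile l ∈ ℝ^T with l_t ≥ 0 and Σ_{t=1}^T l_t > 0, the marginal system cost impact MCI(E) = (1/Σ_t l_t)·Σ_{t=1}^T (a·g*_t(E) + b)·l_t converges to a·d̄ + b as E → ∞. -/

import Mathlib

open Finset Filter

/-- Feasibility for the electricity pool model (P2) at storage capacity `E`:
the states of charge `x_k = E/2 + ∑_{t ≤ k} u t` (with `x_0 = E/2`) satisfy
`0 ≤ x_k ≤ E` for all `k`, and the terminal condition `x_T = E/2` holds. -/
def poolFeasible (T : ℕ) (E : ℝ) (u : Fin T → ℝ) : Prop :=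
  (∀ k : Fin T, 0 ≤ E / 2 + ∑ t ∈ Finset.Iic k, u t) ∧
  (∀ k : Fin T, E / 2 + ∑ t ∈ Finset.Iic k, u t ≤ E) ∧
  E / 2 + ∑ t, u t = E / 2

/-- Total generation cost `∑ t C (d t + u t)` with `C g = (1/2)·a·g² + b·g + c`. -/
noncomputable def poolCost (T : ℕ) (a b c : ℝ) (d u : Fin T → ℝ) : ℝ :=
  ∑ t, ((1 / 2) * a * (d t + u t) ^ 2 + b * (d t + u t) + c)

/-- Optimal cost `C*(E)` of the pool model (P2). -/
noncomputable def poolCstar (T : ℕ) (a b c : ℝ) (d : Fin T → ℝ) (E : ℝ) : ℝ :=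
  sInf {y : ℝ | ∃ u : Fin T → ℝ, poolFeasible T E u ∧ y = poolCost T a b c d u}

lemma pool_bddBelow (T : ℕ) (a b c : ℝ) (ha : 0 < a) (d : Fin T → ℝ) (E : ℝ) :
    BddBelow {y : ℝ | ∃ u : Fin T → ℝ, poolFeasible T E u ∧ y = poolCost T a b c d u} := by
  refine ⟨(T : ℝ) * (c - b ^ 2 / (2 * a)), ?_⟩
  rintro y ⟨u, _, rfl⟩
  unfold poolCost
  calc (T : ℝ) * (c - b ^ 2 / (2 * a)) = ∑ _t : Fin T, (c - b ^ 2 / (2 * a)) := by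
        simp [mul_comm]
        ring
    _ ≤ _ := by
        apply Finset.sum_le_sum
        intro t _
        have h : 0 ≤ (1 / 2) * a * (d t + u t + b / a) ^ 2 := by positivity
        have : (1 / 2) * a * (d t + u t + b / a) ^ 2 =
            (1 / 2) * a * (d t + u t) ^ 2 + b * (d t + u t) + b ^ 2 / (2 * a) := by
          field_simp
          ring
        nlinarith [h]

/-- In the pool model (P2), for every nonnegative load profile `l`
with `∑ t, l t > 0`, the marginal system cost impact
`MCI(E) = (1/∑ t, l t)·∑ t, (a·g*_t(E) + b)·l t` converges to `a·d̄ + b` as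
`E → ∞`. Here `gstar` is any selection of optimal generation profiles. -/
theorem pool_mci_tendsto
    (T : ℕ) (hT : 1 ≤ T) (a b c : ℝ) (ha : 0 < a) (d : Fin T → ℝ)
    (gstar : ℝ → Fin T → ℝ)
    (hgstar : ∀ E : ℝ, 0 ≤ E → ∃ u : Fin T → ℝ, poolFeasible T E u ∧
      (∀ t, gstar E t = d t + u t) ∧
      poolCost T a b c d u = poolCstar T a b c d E)
    (l : Fin T → ℝ) (hl : ∀ t, 0 ≤ l t) (hL : 0 < ∑ t, l t) :
    Tendsto
      (fun E : ℝ => (1 / ∑ t, l t) * ∑ t, (a * gstar E t + b) * l t)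
      atTop
      (nhds (a * ((∑ t, d t) / (T : ℝ)) + b)) := by
  have hTpos : (0 : ℝ) < T := by exact_mod_cast hT
  set db : ℝ := (∑ t, d t) / (T : ℝ) with hdb
  set M : ℝ := ∑ t, |db - d t| with hM
  have hM0 : 0 ≤ M := Finset.sum_nonneg (fun t _ => abs_nonneg _)
  -- eventually the gstar profile is constant equal to db
  have key : ∀ E : ℝ, 2 * M ≤ E → 0 ≤ E → ∀ t, gstar E t = db := by
    intro E hE hE0 t
    obtain ⟨u, hu, hgu, hopt⟩ := hgstar E hE0
    -- the flat control is feasible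
    have hsum_flat : ∑ t : Fin T, (db - d t) = 0 := by
      rw [Finset.sum_sub_distrib, Finset.sum_const]
      simp only [Finset.card_univ, Fintype.card_fin, nsmul_eq_mul, hdb]
      field_simp
      ring
    have hflat : poolFeasible T E (fun t => db - d t) := by
      refine ⟨?_, ?_, ?_⟩
      · intro k
        have habs : |∑ t ∈ Finset.Iic k, (db - d t)| ≤ M := by
          calc |∑ t ∈ Finset.Iic k, (db - d t)| ≤ ∑ t ∈ Finset.Iic k, |db - d t| :=
                Finset.abs_sum_le_sum_abs _ _
            _ ≤ M := Finset.sum_le_sum_of_subset_of_nonneg (Finset.subset_univ _)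
                (fun t _ _ => abs_nonneg _)
        have := (abs_le.mp habs).1
        linarith
      · intro k
        have habs : |∑ t ∈ Finset.Iic k, (db - d t)| ≤ M := by
          calc |∑ t ∈ Finset.Iic k, (db - d t)| ≤ ∑ t ∈ Finset.Iic k, |db - d t| :=
                Finset.abs_sum_le_sum_abs _ _
            _ ≤ M := Finset.sum_le_sum_of_subset_of_nonneg (Finset.subset_univ _)
                (fun t _ _ => abs_nonneg _)
        have := (abs_le.mp habs).2
        linarith
      · rw [hsum_flat]; ring
    -- cost comparison
    have hle : poolCost T a b c d u ≤ poolCost T a b c d (fun t => db - d t) := by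
      rw [hopt]
      exact csInf_le (pool_bddBelow T a b c ha d E) ⟨_, hflat, rfl⟩
    -- sum of u is 0
    have hu0 : ∑ t, u t = 0 := by linarith [hu.2.2]
    have hgsum : ∑ t, (d t + u t) = (T : ℝ) * db := by
      rw [Finset.sum_add_distrib, hu0, hdb]
      field_simp
      ring
    -- expand cost inequality
    have hflatcost : poolCost T a b c d (fun t => db - d t) =
        ∑ _t : Fin T, ((1 / 2) * a * db ^ 2 + b * db + c) := by
      unfold poolCost
      apply Finset.sum_congr rfl
      intro t _
      ring_nf
    have hcost_exp : poolCost T a b c d u =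
        (1 / 2) * a * (∑ t, (d t + u t) ^ 2) + b * ((T : ℝ) * db) + (T : ℝ) * c := by
      unfold poolCost
      rw [Finset.sum_add_distrib, Finset.sum_add_distrib, ← Finset.mul_sum,
        ← Finset.mul_sum, hgsum]
      simp [mul_comm]
    have hflatcost' : poolCost T a b c d (fun t => db - d t) =
        (1 / 2) * a * ((T : ℝ) * db ^ 2) + b * ((T : ℝ) * db) + (T : ℝ) * c := by
      rw [hflatcost, Finset.sum_const]
      simp only [Finset.card_univ, Fintype.card_fin, nsmul_eq_mul]
      ring
    have hsq : ∑ t, (d t + u t) ^ 2 ≤ (T : ℝ) * db ^ 2 := by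
      rw [hcost_exp, hflatcost'] at hle
      nlinarith
    have hdev : ∑ t, (d t + u t - db) ^ 2 ≤ 0 := by
      have hexpand : ∀ s : Fin T, (d s + u s - db) ^ 2 =
          (d s + u s) ^ 2 - 2 * db * (d s + u s) + db ^ 2 := fun s => by ring
      have heq : ∑ t, (d t + u t - db) ^ 2 =
          (∑ t, (d t + u t) ^ 2) - 2 * db * (∑ t, (d t + u t)) + (T : ℝ) * db ^ 2 := by
        simp_rw [hexpand]
        rw [Finset.sum_add_distrib, Finset.sum_sub_distrib, ← Finset.mul_sum,
          Finset.sum_const]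
        simp [mul_comm]
      rw [heq, hgsum]
      nlinarith [hsq]
    have hzero : ∀ t : Fin T, (d t + u t - db) ^ 2 = 0 := by
      intro t
      have hnn : ∀ s ∈ Finset.univ, 0 ≤ (d s + u s - db : ℝ) ^ 2 := fun s _ => sq_nonneg _
      have heq0 : ∑ t, (d t + u t - db) ^ 2 = 0 :=
        le_antisymm hdev (Finset.sum_nonneg hnn)
      exact (Finset.sum_eq_zero_iff_of_nonneg hnn).mp heq0 t (Finset.mem_univ t)
    have := hzero t
    have := sq_eq_zero_iff.mp this
    rw [hgu t]
    linarith
  -- conclude via eventual equality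
  have hev : ∀ᶠ E in atTop,
      (1 / ∑ t, l t) * ∑ t, (a * gstar E t + b) * l t = a * db + b := by
    filter_upwards [eventually_ge_atTop (2 * M), eventually_ge_atTop (0 : ℝ)] with E hE hE0
    have hg := key E hE hE0
    have : ∑ t, (a * gstar E t + b) * l t = (a * db + b) * ∑ t, l t := by
      rw [Finset.mul_sum]
      apply Finset.sum_congr rfl
      intro t _
      rw [hg t]
    rw [this]
    field_simp
  exact Tendsto.congr' (hev.mono fun E h => h.symm) tendsto_const_nhds
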